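/- There exists a nonempty closed subset Q of Baire space that is not compact and such that any two distinct elements f, g ∈ Q are Turing incomparable: for all f, g ∈ Q with f ≠ g, neither f ≤ᵀ g nor g ≤ᵀ f. -/

import Mathlib

/-- Partial recursiveness in an oracle `g` (following Mathlib's `Nat.Partrec`,
with an extra `oracle` constructor). -/
inductive RecursiveIn' (g : ℕ →. ℕ) : (ℕ →. ℕ) → Prop
  | zero : RecursiveIn' g (fun _ => Part.some 0)
  | succ : RecursiveIn' g ↑Nat.succ
  | left : RecursiveIn' g ↑(fun n : ℕ => n.unpair.1)
  | right : RecursiveIn' g ↑(fun n : ℕ => n.unpair.2)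
  | oracle : RecursiveIn' g g
  | pair {f h : ℕ →. ℕ} : RecursiveIn' g f → RecursiveIn' g h →
      RecursiveIn' g (fun n => Nat.pair <$> f n <*> h n)
  | comp {f h : ℕ →. ℕ} : RecursiveIn' g f → RecursiveIn' g h →
      RecursiveIn' g (fun n => h n >>= f)
  | prec {f h : ℕ →. ℕ} : RecursiveIn' g f → RecursiveIn' g h →
      RecursiveIn' g (Nat.unpaired fun a n =>
        n.rec (f a) fun y IH => do let i ← IH; h (Nat.pair a (Nat.pair y i)))
  | rfind {f : ℕ →. ℕ} : RecursiveIn' g f →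
      RecursiveIn' g (fun a => Nat.rfind fun n => (fun m => m = 0) <$> f (Nat.pair a n))

/-- `f ≤ᵀ g` : `f` is Turing reducible to `g`, i.e. `f` is computable with oracle `g`. -/
def TuringReducible' (f g : ℕ → ℕ) : Prop :=
  RecursiveIn' ↑g ↑f

infix:50 " ≤ᵀ " => TuringReducible'



inductive OCode
  | zero | succ | left | right | oracle
  | pair (a b : OCode) | comp (a b : OCode) | prec (a b : OCode) | rfind (a : OCode)

def oeval (g : ℕ → ℕ) : OCode → ℕ →. ℕ
  | .zero => fun _ => Part.some 0
  | .succ => ↑Nat.succ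
  | .left => ↑(fun n : ℕ => n.unpair.1)
  | .right => ↑(fun n : ℕ => n.unpair.2)
  | .oracle => ↑g
  | .pair a b => fun n => Nat.pair <$> oeval g a n <*> oeval g b n
  | .comp a b => fun n => oeval g b n >>= oeval g a
  | .prec a b => Nat.unpaired fun x n =>
      n.rec (oeval g a x) fun y IH => do let i ← IH; oeval g b (Nat.pair x (Nat.pair y i))
  | .rfind a => fun x => Nat.rfind fun n => (fun m => m = 0) <$> oeval g a (Nat.pair x n)

theorem exists_code {g : ℕ → ℕ} {f : ℕ →. ℕ} (h : RecursiveIn' ↑g f) :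
    ∃ c : OCode, oeval g c = f := by
  induction h with
  | zero => exact ⟨.zero, rfl⟩
  | succ => exact ⟨.succ, rfl⟩
  | left => exact ⟨.left, rfl⟩
  | right => exact ⟨.right, rfl⟩
  | oracle => exact ⟨.oracle, rfl⟩
  | pair _ _ ih₁ ih₂ =>
      obtain ⟨c₁, rfl⟩ := ih₁; obtain ⟨c₂, rfl⟩ := ih₂; exact ⟨.pair c₁ c₂, rfl⟩
  | comp _ _ ih₁ ih₂ =>
      obtain ⟨c₁, rfl⟩ := ih₁; obtain ⟨c₂, rfl⟩ := ih₂; exact ⟨.comp c₁ c₂, rfl⟩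
  | prec _ _ ih₁ ih₂ =>
      obtain ⟨c₁, rfl⟩ := ih₁; obtain ⟨c₂, rfl⟩ := ih₂; exact ⟨.prec c₁ c₂, rfl⟩
  | rfind _ ih =>
      obtain ⟨c, rfl⟩ := ih; exact ⟨.rfind c, rfl⟩

def encodeC : OCode → ℕ
  | .zero => 0
  | .succ => 1
  | .left => 2
  | .right => 3
  | .oracle => 4
  | .pair a b => 4 * Nat.pair (encodeC a) (encodeC b) + 5
  | .comp a b => 4 * Nat.pair (encodeC a) (encodeC b) + 6
  | .prec a b => 4 * Nat.pair (encodeC a) (encodeC b) + 7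
  | .rfind a => 4 * Nat.pair (encodeC a) (encodeC a) + 8

theorem encodeC_inj : Function.Injective encodeC := by
  intro a
  induction a with
  | zero => intro b h; cases b <;> simp only [encodeC] at h <;> first | rfl | omega
  | succ => intro b h; cases b <;> simp only [encodeC] at h <;> first | rfl | omega
  | left => intro b h; cases b <;> simp only [encodeC] at h <;> first | rfl | omega
  | right => intro b h; cases b <;> simp only [encodeC] at h <;> first | rfl | omega
  | oracle => intro b h; cases b <;> simp only [encodeC] at h <;> first | rfl | omega
  | pair a₁ a₂ ih₁ ih₂ =>
      intro b h; cases b <;> simp only [encodeC] at h <;> try omega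
      case pair b₁ b₂ =>
        have := Nat.pair_eq_pair.mp (by omega : Nat.pair (encodeC a₁) (encodeC a₂) = Nat.pair (encodeC b₁) (encodeC b₂))
        rw [ih₁ this.1, ih₂ this.2]
  | comp a₁ a₂ ih₁ ih₂ =>
      intro b h; cases b <;> simp only [encodeC] at h <;> try omega
      case comp b₁ b₂ =>
        have := Nat.pair_eq_pair.mp (by omega : Nat.pair (encodeC a₁) (encodeC a₂) = Nat.pair (encodeC b₁) (encodeC b₂))
        rw [ih₁ this.1, ih₂ this.2]
  | prec a₁ a₂ ih₁ ih₂ =>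
      intro b h; cases b <;> simp only [encodeC] at h <;> try omega
      case prec b₁ b₂ =>
        have := Nat.pair_eq_pair.mp (by omega : Nat.pair (encodeC a₁) (encodeC a₂) = Nat.pair (encodeC b₁) (encodeC b₂))
        rw [ih₁ this.1, ih₂ this.2]
  | rfind a₁ ih₁ =>
      intro b h; cases b <;> simp only [encodeC] at h <;> try omega
      case rfind b₁ =>
        have := Nat.pair_eq_pair.mp (by omega : Nat.pair (encodeC a₁) (encodeC a₁) = Nat.pair (encodeC b₁) (encodeC b₁))
        rw [ih₁ this.1]

instance : Countable OCode := ⟨⟨encodeC, encodeC_inj⟩⟩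

theorem prec_use {g : ℕ → ℕ} {a b : OCode}
    (iha : ∀ {n m : ℕ}, m ∈ oeval g a n → ∃ N, ∀ g' : ℕ → ℕ, (∀ i < N, g' i = g i) → m ∈ oeval g' a n)
    (ihb : ∀ {n m : ℕ}, m ∈ oeval g b n → ∃ N, ∀ g' : ℕ → ℕ, (∀ i < N, g' i = g i) → m ∈ oeval g' b n)
    (x : ℕ) : ∀ (k m : ℕ),
      m ∈ (Nat.rec (oeval g a x) (fun y IH => do let i ← IH; oeval g b (Nat.pair x (Nat.pair y i))) k : Part ℕ) →
    ∃ N, ∀ g' : ℕ → ℕ, (∀ i < N, g' i = g i) →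
      m ∈ (Nat.rec (oeval g' a x) (fun y IH => do let i ← IH; oeval g' b (Nat.pair x (Nat.pair y i))) k : Part ℕ) := by
  intro k
  induction k with
  | zero => intro m hm; obtain ⟨N, hN⟩ := iha hm; exact ⟨N, fun g' hg' => hN g' hg'⟩
  | succ k ih =>
      intro m hm
      rw [show (Nat.rec (oeval g a x) (fun y IH => do let i ← IH; oeval g b (Nat.pair x (Nat.pair y i))) (k+1) : Part ℕ)
          = (Nat.rec (oeval g a x) (fun y IH => do let i ← IH; oeval g b (Nat.pair x (Nat.pair y i))) k : Part ℕ) >>=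
            (fun i => oeval g b (Nat.pair x (Nat.pair k i))) from rfl] at hm
      obtain ⟨i, hi, hm⟩ := Part.mem_bind_iff.mp hm
      obtain ⟨N₁, hN₁⟩ := ih i hi
      obtain ⟨N₂, hN₂⟩ := ihb hm
      refine ⟨max N₁ N₂, fun g' hg' => ?_⟩
      rw [show (Nat.rec (oeval g' a x) (fun y IH => do let i ← IH; oeval g' b (Nat.pair x (Nat.pair y i))) (k+1) : Part ℕ)
          = (Nat.rec (oeval g' a x) (fun y IH => do let i ← IH; oeval g' b (Nat.pair x (Nat.pair y i))) k : Part ℕ) >>=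
            (fun i => oeval g' b (Nat.pair x (Nat.pair k i))) from rfl]
      exact Part.mem_bind_iff.mpr ⟨i, hN₁ g' (fun j hj => hg' j (lt_of_lt_of_le hj (le_max_left _ _))),
        hN₂ g' (fun j hj => hg' j (lt_of_lt_of_le hj (le_max_right _ _)))⟩

theorem oeval_use {g : ℕ → ℕ} {c : OCode} : ∀ {n m : ℕ}, m ∈ oeval g c n →
    ∃ N, ∀ g' : ℕ → ℕ, (∀ i < N, g' i = g i) → m ∈ oeval g' c n := by
  induction c with
  | zero => exact fun h => ⟨0, fun g' _ => h⟩
  | succ => exact fun h => ⟨0, fun g' _ => h⟩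
  | left => exact fun h => ⟨0, fun g' _ => h⟩
  | right => exact fun h => ⟨0, fun g' _ => h⟩
  | oracle =>
      intro n m h
      simp only [oeval, PFun.coe_val, Part.mem_some_iff] at h
      exact ⟨n + 1, fun g' hg' => by
        simp only [oeval, PFun.coe_val, Part.mem_some_iff, h, hg' n (Nat.lt_succ_self n)]⟩
  | pair a b iha ihb =>
      intro n m h
      simp only [oeval, Seq.seq] at h ⊢
      obtain ⟨f', hf', hm⟩ := Part.mem_bind_iff.mp h
      obtain ⟨x, hx, rfl⟩ := (Part.mem_map_iff _).mp hf'
      obtain ⟨y, hy, rfl⟩ := (Part.mem_map_iff _).mp hm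
      obtain ⟨N₁, hN₁⟩ := iha hx
      obtain ⟨N₂, hN₂⟩ := ihb hy
      refine ⟨max N₁ N₂, fun g' hg' => ?_⟩
      exact Part.mem_bind_iff.mpr ⟨_, (Part.mem_map_iff _).mpr
          ⟨x, hN₁ g' (fun j hj => hg' j (lt_of_lt_of_le hj (le_max_left _ _))), rfl⟩,
        (Part.mem_map_iff _).mpr
          ⟨y, hN₂ g' (fun j hj => hg' j (lt_of_lt_of_le hj (le_max_right _ _))), rfl⟩⟩
  | comp a b iha ihb =>
      intro n m h
      simp only [oeval] at h ⊢
      obtain ⟨y, hy, hm⟩ := Part.mem_bind_iff.mp h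
      obtain ⟨N₁, hN₁⟩ := ihb hy
      obtain ⟨N₂, hN₂⟩ := iha hm
      refine ⟨max N₁ N₂, fun g' hg' => ?_⟩
      exact Part.mem_bind_iff.mpr ⟨y, hN₁ g' (fun j hj => hg' j (lt_of_lt_of_le hj (le_max_left _ _))),
          hN₂ g' (fun j hj => hg' j (lt_of_lt_of_le hj (le_max_right _ _)))⟩
  | prec a b iha ihb =>
      intro n m h
      simp only [oeval, Nat.unpaired] at h ⊢
      exact prec_use @iha @ihb n.unpair.1 n.unpair.2 m h
  | rfind a iha =>
      intro n m h
      simp only [oeval] at h ⊢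
      have key : ∀ j : ℕ, j ≤ m → ∃ N, ∀ g' : ℕ → ℕ, (∀ i < N, g' i = g i) →
          (decide (j = m) : Bool) ∈ (fun v => decide (v = 0)) <$> oeval g' a (Nat.pair n j) := by
        intro j hj
        rcases Nat.lt_or_ge j m with hlt | hge
        · have hf : (false : Bool) ∈ (fun v => decide (v = 0)) <$> oeval g a (Nat.pair n j) :=
            Nat.rfind_min h hlt
          obtain ⟨v, hv, hv0⟩ := (Part.mem_map_iff _).mp hf
          obtain ⟨N, hN⟩ := iha hv
          refine ⟨N, fun g' hg' => ?_⟩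
          rw [show (decide (j = m) : Bool) = false by simp; omega]
          exact (Part.mem_map_iff _).mpr ⟨v, hN g' hg', hv0⟩
        · have hjm : j = m := by omega
          subst hjm
          have ht : (true : Bool) ∈ (fun v => decide (v = 0)) <$> oeval g a (Nat.pair n j) :=
            Nat.rfind_spec h
          obtain ⟨v, hv, hv0⟩ := (Part.mem_map_iff _).mp ht
          obtain ⟨N, hN⟩ := iha hv
          refine ⟨N, fun g' hg' => ?_⟩
          rw [show (decide (j = j) : Bool) = true by simp]
          exact (Part.mem_map_iff _).mpr ⟨v, hN g' hg', hv0⟩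
      choose N hN using fun j : Fin (m + 1) => key j (by omega)
      refine ⟨Finset.univ.sup N, fun g' hg' => ?_⟩
      refine Nat.mem_rfind.mpr ⟨?_, fun {j} hj => ?_⟩
      · have := hN ⟨m, Nat.lt_succ_self m⟩ g'
          (fun i hi => hg' i (lt_of_lt_of_le hi (Finset.le_sup (Finset.mem_univ _))))
        simpa using this
      · have := hN ⟨j, by omega⟩ g'
          (fun i hi => hg' i (lt_of_lt_of_le hi (Finset.le_sup (Finset.mem_univ _))))
        simp only [Fin.val_mk] at this
        rw [show (decide (j = m) : Bool) = false by simp; omega] at this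
        exact this

/-- Pad a finite list with zeros. -/
def extFn (σ : List ℕ) : ℕ → ℕ := fun i => σ.getD i 0

/-- `h` extends the finite condition `σ`. -/
def ExtC (σ : List ℕ) (h : ℕ → ℕ) : Prop := ∀ i < σ.length, h i = extFn σ i

theorem extFn_self (σ : List ℕ) : ExtC σ (extFn σ) := fun _ _ => rfl

theorem extFn_prefix {σ τ : List ℕ} (hp : σ <+: τ) {i : ℕ} (hi : i < σ.length) :
    extFn τ i = extFn σ i := by
  obtain ⟨ρ, rfl⟩ := hp
  simp [extFn, List.getD, List.getElem?_append_left hi]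

theorem ExtC.mono {σ τ : List ℕ} (hp : σ <+: τ) {h : ℕ → ℕ} (he : ExtC τ h) : ExtC σ h := by
  intro i hi
  rw [he i (lt_of_lt_of_le hi hp.length_le), extFn_prefix hp hi]

theorem prefix_of_take {h : ℕ → ℕ} {σ : List ℕ} (he : ExtC σ h) {N : ℕ} (hN : σ.length ≤ N) :
    σ <+: List.ofFn (fun i : Fin N => h i) := by
  refine List.prefix_iff_eq_take.mpr (List.ext_get ?_ ?_).symm
  · simp [hN]
  · intro i h1 h2
    simp only [List.get_eq_getElem, List.getElem_take, List.getElem_ofFn]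
    simp only [List.length_take, List.length_ofFn, lt_min_iff] at h1
    have := he i (by omega)
    simp [this, extFn, List.getD, List.getElem?_eq_getElem (by omega : i < σ.length)]

theorem Ext_ofFn {h : ℕ → ℕ} {N : ℕ} : ExtC (List.ofFn (fun i : Fin N => h i)) h := by
  intro i hi
  simp only [List.length_ofFn] at hi
  simp [extFn, List.getD, List.getElem?_ofFn, List.ofFnNthVal, hi]

/-- The functions "determined" by a code together with a finite condition. -/
def Determines (c : OCode) (σ : List ℕ) (f : ℕ → ℕ) : Prop :=
  (∀ τ : List ℕ, σ <+: τ → ∀ n m : ℕ, m ∈ oeval (extFn τ) c n → m = f n) ∧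
  (∀ n : ℕ, ∃ τ : List ℕ, σ <+: τ ∧ (oeval (extFn τ) c n).Dom)

def Dset : Set (ℕ → ℕ) := {f | ∃ c σ, Determines c σ f}

theorem Determines_unique {c σ f f'} (h : Determines c σ f) (h' : Determines c σ f') : f = f' := by
  funext n
  obtain ⟨τ, hτ, hdom⟩ := h.2 n
  have hm : (oeval (extFn τ) c n).get hdom ∈ oeval (extFn τ) c n := Part.get_mem hdom
  rw [← h.1 τ hτ n _ hm, ← h'.1 τ hτ n _ hm]

theorem Dset_countable : Dset.Countable := by
  classical
  have : Dset ⊆ Set.range (fun p : OCode × List ℕ =>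
      if h : ∃ f, Determines p.1 p.2 f then Classical.choose h else (fun _ => 0)) := by
    rintro f ⟨c, σ, hf⟩
    refine ⟨(c, σ), ?_⟩
    simp only
    rw [dif_pos ⟨f, hf⟩]
    exact Determines_unique (Classical.choose_spec (⟨f, hf⟩ : ∃ f, Determines c σ f)) hf
  exact Set.Countable.mono this (Set.countable_range _)

theorem extFn_append_replicate (τ : List ℕ) (k i : ℕ) :
    extFn (τ ++ List.replicate k 0) i = extFn τ i := by
  rcases Nat.lt_or_ge i τ.length with hi | hi
  · exact extFn_prefix (List.prefix_append _ _) hi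
  · simp only [extFn]
    rw [List.getD_eq_default _ _ hi, List.getD_append_right _ _ _ _ hi]
    rcases Nat.lt_or_ge (i - τ.length) k with h2 | h2
    · simp [List.getD, List.getElem?_eq_getElem (by simpa using h2 : i - τ.length < (List.replicate k 0).length)]
    · rw [List.getD_eq_default]
      simpa using h2

theorem kill_step {f : ℕ → ℕ} (hfD : f ∉ Dset) (c : OCode) (σ : List ℕ) :
    ∃ τ, σ <+: τ ∧ ∀ h : ℕ → ℕ, ExtC τ h → ¬(∀ n, f n ∈ oeval h c n) := by
  by_cases h1 : ∃ τ n m, σ <+: τ ∧ m ∈ oeval (extFn τ) c n ∧ m ≠ f n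
  · obtain ⟨τ', n, m, hp, hm, hne⟩ := h1
    obtain ⟨N, hN⟩ := oeval_use hm
    refine ⟨τ' ++ List.replicate (N - τ'.length) 0, hp.trans (List.prefix_append _ _), ?_⟩
    intro h hE hall
    have hlen : N ≤ (τ' ++ List.replicate (N - τ'.length) 0).length := by simp; omega
    have hagree : ∀ i < N, h i = extFn τ' i := by
      intro i hi
      rw [hE i (by omega), extFn_append_replicate]
    exact hne (Part.mem_unique (hN h hagree) (hall n))
  · push_neg at h1
    by_cases h2 : ∀ n, ∃ τ, σ <+: τ ∧ (oeval (extFn τ) c n).Dom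
    · exact absurd ⟨c, σ, fun τ hp n m hm => h1 τ n m hp hm, h2⟩ hfD
    · push_neg at h2
      obtain ⟨n₀, hn₀⟩ := h2
      refine ⟨σ, List.prefix_refl σ, ?_⟩
      intro h hE hall
      obtain ⟨N, hN⟩ := oeval_use (hall n₀)
      set τ := List.ofFn (fun i : Fin (max N σ.length) => h i) with hτ
      have hp : σ <+: τ := prefix_of_take hE (le_max_right _ _)
      have hmem : f n₀ ∈ oeval (extFn τ) c n₀ := by
        refine hN _ (fun i hi => ?_)
        exact (Ext_ofFn i (by simp [hτ]; omega)).symm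
      exact hn₀ τ hp (Part.dom_iff_mem.mpr ⟨_, hmem⟩)

theorem diff_step (u : ℕ → ℕ) (σ : List ℕ) :
    ∃ τ, σ <+: τ ∧ ∀ h : ℕ → ℕ, ExtC τ h → h ≠ u := by
  refine ⟨σ ++ [u σ.length + 1], List.prefix_append _ _, fun h hE hu => ?_⟩
  have h1 := hE σ.length (by simp)
  rw [hu] at h1
  have h2 : extFn (σ ++ [u σ.length + 1]) σ.length = u σ.length + 1 := by
    simp [extFn, List.getD, List.getElem?_append_right (le_refl σ.length)]
  omega

/-- The type of requirements. -/
abbrev ReqT := ((ℕ → ℕ) × OCode) ⊕ (ℕ → ℕ)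

def QProp : ReqT → (ℕ → ℕ) → Prop
  | .inl (f, c), h => ¬(∀ n, f n ∈ oeval h c n)
  | .inr u, h => h ≠ u

theorem forcing (k : ℕ) (A : Set (ℕ → ℕ)) (hA : A.Countable) (l : List (ℕ → ℕ))
    (hl : ∀ f ∈ l, f ∉ Dset) :
    ∃ h : ℕ → ℕ, h 0 = k ∧ h ∉ A ∧ h ∉ Dset ∧
      ∀ f ∈ l, ∀ c : OCode, ¬(∀ n, f n ∈ oeval h c n) := by
  classical
  set S : Set ReqT :=
    (Sum.inl '' ({f | f ∈ l} ×ˢ Set.univ)) ∪ (Sum.inr '' (insert (fun _ => 0) (A ∪ Dset))) with hS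
  have hScount : S.Countable := by
    apply Set.Countable.union
    · exact Set.Countable.image (Set.Countable.prod l.finite_toSet.countable (Set.countable_univ)) _
    · exact Set.Countable.image ((hA.union Dset_countable).insert _) _
  have hSne : S.Nonempty := ⟨Sum.inr (fun _ => 0), Or.inr ⟨_, Set.mem_insert _ _, rfl⟩⟩
  obtain ⟨F, hF⟩ := Set.Countable.exists_eq_range hScount hSne
  -- step function
  have hstep : ∀ (t : ReqT) (σ : List ℕ), ∃ τ, σ <+: τ ∧ σ.length < τ.length ∧
      (t ∈ S → ∀ h : ℕ → ℕ, ExtC τ h → QProp t h) := by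
    intro t σ
    by_cases ht : t ∈ S
    · have : ∃ τ, σ <+: τ ∧ ∀ h : ℕ → ℕ, ExtC τ h → QProp t h := by
        match t with
        | .inl (f, c) =>
            have hfl : f ∈ l := by
              rcases (hS ▸ ht) with h | h
              · obtain ⟨p, hp, hpe⟩ := h
                cases hpe; exact hp.1
              · obtain ⟨u, _, hpe⟩ := h; cases hpe
            exact kill_step (hl f hfl) c σ
        | .inr u => exact diff_step u σ
      obtain ⟨τ, hp, hq⟩ := this
      exact ⟨τ ++ [0], hp.trans (List.prefix_append _ _), by have := hp.length_le; simp; omega,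
        fun _ h hE => hq h (hE.mono (List.prefix_append _ _))⟩
    · exact ⟨σ ++ [0], List.prefix_append _ _, by simp, fun h => absurd h ht⟩
  choose stepτ hpre hlen hQ using hstep
  set σseq : ℕ → List ℕ := fun s => Nat.rec [k] (fun s ih => stepτ (F s) ih) s with hσseq
  have hsucc : ∀ s, σseq (s + 1) = stepτ (F s) (σseq s) := fun s => rfl
  have hmono : ∀ s s', s ≤ s' → σseq s <+: σseq s' := by
    intro s s' hss
    induction s' with
    | zero => cases Nat.le_zero.mp hss; exact List.prefix_refl _
    | succ s' ih =>
        rcases Nat.lt_or_ge s (s' + 1) with h | h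
        · exact (ih (by omega)).trans (by rw [hsucc]; exact hpre _ _)
        · cases (by omega : s = s' + 1); exact List.prefix_refl _
  have hlength : ∀ s, s < (σseq s).length := by
    intro s
    induction s with
    | zero => simp [hσseq]
    | succ s ih => have := hlen (F s) (σseq s); rw [hsucc]; omega
  set h : ℕ → ℕ := fun i => extFn (σseq (i + 1)) i with hh
  have hExt : ∀ s, ExtC (σseq s) h := by
    intro s i hi
    show extFn (σseq (i + 1)) i = extFn (σseq s) i
    rcases Nat.le_total s (i + 1) with hc | hc
    · exact extFn_prefix (hmono s (i+1) hc) hi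
    · exact (extFn_prefix (hmono (i+1) s hc) (by have := hlength (i+1); omega)).symm
  have hQall : ∀ t ∈ S, QProp t h := by
    intro t ht
    rw [hF] at ht
    obtain ⟨s, rfl⟩ := ht
    exact hQ (F s) (σseq s) (hF ▸ Set.mem_range_self s) h (hsucc s ▸ hExt (s + 1))
  have h0 : h 0 = k := by
    have := hExt 0 0 (by simp [hσseq])
    simpa [hσseq, extFn] using this
  refine ⟨h, h0, ?_, ?_, ?_⟩
  · intro hA'
    exact hQall (Sum.inr h) (Or.inr ⟨h, Set.mem_insert_iff.mpr (Or.inr (Or.inl hA')), rfl⟩) rfl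
  · intro hD'
    exact hQall (Sum.inr h) (Or.inr ⟨h, Set.mem_insert_iff.mpr (Or.inr (Or.inr hD')), rfl⟩) rfl
  · intro f hf c
    exact hQall (Sum.inl (f, c)) (Or.inl ⟨(f, c), ⟨hf, Set.mem_univ _⟩, rfl⟩)

/-- The lower Turing cone of `g` is countable. -/
theorem cone_countable (g : ℕ → ℕ) : {f : ℕ → ℕ | TuringReducible' f g}.Countable := by
  classical
  have hsub : {f : ℕ → ℕ | TuringReducible' f g} ⊆ Set.range (fun c : OCode =>
      fun n => if h : (oeval g c n).Dom then (oeval g c n).get h else 0) := by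
    intro f hf
    obtain ⟨c, hc⟩ := exists_code hf
    refine ⟨c, ?_⟩
    funext n
    have : oeval g c n = Part.some (f n) := by rw [hc]; rfl
    simp [this]
  exact Set.Countable.mono hsub (Set.countable_range _)

theorem listCone_countable (l : List (ℕ → ℕ)) : {x : ℕ → ℕ | ∃ f ∈ l, TuringReducible' x f}.Countable := by
  have : {x : ℕ → ℕ | ∃ f ∈ l, TuringReducible' x f} = ⋃ f ∈ {f : ℕ → ℕ | f ∈ l}, {x | TuringReducible' x f} := by
    ext x; simp
  rw [this]
  exact Set.Countable.biUnion l.finite_toSet.countable (fun f _ => cone_countable f)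

open Classical in
noncomputable def pick (k : ℕ) (l : List (ℕ → ℕ)) : ℕ → ℕ :=
  if h : ∀ f ∈ l, f ∉ Dset then
    (forcing k {x | ∃ f ∈ l, TuringReducible' x f} (listCone_countable l) l h).choose
  else fun _ => 0

theorem pick_spec (k : ℕ) (l : List (ℕ → ℕ)) (hl : ∀ f ∈ l, f ∉ Dset) :
    (pick k l) 0 = k ∧ (¬ ∃ f ∈ l, TuringReducible' (pick k l) f) ∧ pick k l ∉ Dset ∧
      ∀ f ∈ l, ∀ c : OCode, ¬(∀ n, f n ∈ oeval (pick k l) c n) := by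
  rw [pick, dif_pos hl]
  exact (forcing k _ (listCone_countable l) l hl).choose_spec

noncomputable def Glist : ℕ → List (ℕ → ℕ)
  | 0 => []
  | k + 1 => Glist k ++ [pick k (Glist k)]

noncomputable def Ffun (k : ℕ) : ℕ → ℕ := pick k (Glist k)

theorem Glist_mem (k : ℕ) : ∀ f, f ∈ Glist k ↔ ∃ j < k, f = Ffun j := by
  induction k with
  | zero => intro f; simp [Glist]
  | succ k ih =>
      intro f
      simp only [Glist, List.mem_append, List.mem_singleton, ih]
      constructor
      · rintro (⟨j, hj, rfl⟩ | rfl)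
        · exact ⟨j, by omega, rfl⟩
        · exact ⟨k, by omega, rfl⟩
      · rintro ⟨j, hj, rfl⟩
        rcases Nat.lt_or_ge j k with h | h
        · exact Or.inl ⟨j, h, rfl⟩
        · exact Or.inr (by rw [show j = k by omega]; rfl)

theorem Glist_notD (k : ℕ) : ∀ f ∈ Glist k, f ∉ Dset := by
  induction k with
  | zero => simp [Glist]
  | succ k ih =>
      intro f hf
      rw [Glist, List.mem_append, List.mem_singleton] at hf
      rcases hf with hf | rfl
      · exact ih f hf
      · exact (pick_spec k (Glist k) ih).2.2.1

theorem Ffun_spec (k : ℕ) :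
    (Ffun k) 0 = k ∧ (¬ ∃ f ∈ Glist k, TuringReducible' (Ffun k) f) ∧ Ffun k ∉ Dset ∧
      ∀ f ∈ Glist k, ∀ c : OCode, ¬(∀ n, f n ∈ oeval (Ffun k) c n) :=
  pick_spec k (Glist k) (Glist_notD k)

theorem Ffun_incomp {j k : ℕ} (hjk : j < k) :
    ¬ TuringReducible' (Ffun k) (Ffun j) ∧ ¬ TuringReducible' (Ffun j) (Ffun k) := by
  have hmem : Ffun j ∈ Glist k := (Glist_mem k (Ffun j)).mpr ⟨j, hjk, rfl⟩
  constructor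
  · intro hred
    exact (Ffun_spec k).2.1 ⟨Ffun j, hmem, hred⟩
  · intro hred
    obtain ⟨c, hc⟩ := exists_code hred
    refine (Ffun_spec k).2.2.2 (Ffun j) hmem c (fun n => ?_)
    rw [hc]
    exact Part.mem_some _


/-- There is a nonempty closed, non-compact subset `Q` of Baire space any two distinct
elements of which are Turing incomparable. -/
theorem exists_closed_noncompact_pairwise_turing_incomparable :
    ∃ Q : Set (ℕ → ℕ), Q.Nonempty ∧ IsClosed Q ∧ ¬ IsCompact Q ∧
      ∀ f ∈ Q, ∀ g ∈ Q, f ≠ g → ¬ f ≤ᵀ g ∧ ¬ g ≤ᵀ f := by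

  refine ⟨Set.range Ffun, ⟨Ffun 0, 0, rfl⟩, ?_, ?_, ?_⟩
  · -- closed
    refine isClosed_of_closure_subset ?_
    intro x hx
    have key : ∀ n, Ffun (x 0) n = x n := by
      intro n
      have h1 : IsOpen ((fun y : ℕ → ℕ => y 0) ⁻¹' {x 0}) :=
        (isOpen_discrete _).preimage (continuous_apply 0)
      have h2 : IsOpen ((fun y : ℕ → ℕ => y n) ⁻¹' {x n}) :=
        (isOpen_discrete _).preimage (continuous_apply n)
      have hU : IsOpen (((fun y : ℕ → ℕ => y 0) ⁻¹' {x 0}) ∩ ((fun y : ℕ → ℕ => y n) ⁻¹' {x n})) :=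
        h1.inter h2
      obtain ⟨y, ⟨hy0, hyn⟩, k, rfl⟩ := mem_closure_iff.mp hx _ hU ⟨rfl, rfl⟩
      simp only [Set.mem_preimage, Set.mem_singleton_iff] at hy0 hyn
      have hk : k = x 0 := by rw [← (Ffun_spec k).1, hy0]
      rw [← hk, hyn]
    exact ⟨x 0, funext key⟩
  · -- not compact
    intro hc
    have himg : IsCompact ((fun y : ℕ → ℕ => y 0) '' Set.range Ffun) :=
      hc.image (continuous_apply 0)
    have huniv : (fun y : ℕ → ℕ => y 0) '' Set.range Ffun = Set.univ := by
      refine Set.eq_univ_of_forall (fun k => ?_)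
      exact ⟨Ffun k, ⟨k, rfl⟩, (Ffun_spec k).1⟩
    rw [huniv] at himg
    exact Set.infinite_univ himg.finite_of_discrete
  · rintro f ⟨j, rfl⟩ g ⟨k, rfl⟩ hne
    rcases Nat.lt_trichotomy j k with h | h | h
    · exact ⟨(Ffun_incomp h).2, (Ffun_incomp h).1⟩
    · exact absurd (by rw [h]) hne
    · exact ⟨(Ffun_incomp h).1, (Ffun_incomp h).2⟩
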